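/- Let G be a group, K ≤ G, n a positive integer with G = K·ζ_n(G). Then γ_{n+1}(G) ∩ ζ_n(G) = γ_{n+1}(K) ∩ ζ_n(K). -/

import Mathlib

open Pointwise
open scoped commutatorElement

section Aux

open Subgroup

variable {G : Type*} [Group G]

/-- General three subgroups lemma. -/
theorem three_subgroups' {H₁ H₂ H₃ N : Subgroup G} [N.Normal]
    (h1 : ⁅⁅H₂, H₃⁆, H₁⁆ ≤ N) (h2 : ⁅⁅H₃, H₁⁆, H₂⁆ ≤ N) : ⁅⁅H₁, H₂⁆, H₃⁆ ≤ N := by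
  let π := QuotientGroup.mk' N
  have key : ∀ A B C : Subgroup G, ⁅⁅A, B⁆, C⁆ ≤ N ↔
      ⁅⁅Subgroup.map π A, Subgroup.map π B⁆, Subgroup.map π C⁆ = ⊥ := by
    intro A B C
    rw [← Subgroup.map_commutator, ← Subgroup.map_commutator, Subgroup.map_eq_bot_iff,
      QuotientGroup.ker_mk']
  rw [key] at h1 h2 ⊢
  exact Subgroup.commutator_commutator_eq_bot_of_rotate h1 h2

theorem lcs_succ' (n : ℕ) :
    Subgroup.lowerCentralSeries (⊤ : Subgroup G) (n + 1) = ⁅Subgroup.lowerCentralSeries (⊤ : Subgroup G) n, (⊤ : Subgroup G)⁆ := rfl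

theorem ucs_comm_top (m : ℕ) :
    ⁅Subgroup.upperCentralSeries G m, (⊤ : Subgroup G)⁆ ≤ Subgroup.upperCentralSeries G (m - 1) := by
  cases m with
  | zero =>
    rw [Subgroup.commutator_le]
    intro g₁ hg₁ g₂ _
    simp only [Subgroup.upperCentralSeries_zero, Subgroup.mem_bot] at hg₁ ⊢
    simp [hg₁]
  | succ m =>
    rw [Subgroup.commutator_le]
    intro g₁ hg₁ g₂ _
    simpa [commutatorElement_def] using (Subgroup.mem_upperCentralSeries_succ_iff.mp hg₁) g₂

theorem lcs_comm_ucs (i j : ℕ) :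
    ⁅Subgroup.lowerCentralSeries (⊤ : Subgroup G) i, Subgroup.upperCentralSeries G j⁆ ≤ Subgroup.upperCentralSeries G (j - i - 1) := by
  induction i generalizing j with
  | zero =>
    rw [Subgroup.lowerCentralSeries_zero, Subgroup.commutator_comm]
    simpa using ucs_comm_top (G := G) j
  | succ i ih =>
    rw [lcs_succ']
    apply three_subgroups'
    · calc ⁅⁅(⊤ : Subgroup G), Subgroup.upperCentralSeries G j⁆, Subgroup.lowerCentralSeries (⊤ : Subgroup G) i⁆
          ≤ ⁅Subgroup.upperCentralSeries G (j - 1), Subgroup.lowerCentralSeries (⊤ : Subgroup G) i⁆ := by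
            apply Subgroup.commutator_mono _ le_rfl
            rw [Subgroup.commutator_comm]
            exact ucs_comm_top j
        _ = ⁅Subgroup.lowerCentralSeries (⊤ : Subgroup G) i, Subgroup.upperCentralSeries G (j - 1)⁆ :=
            Subgroup.commutator_comm _ _
        _ ≤ Subgroup.upperCentralSeries G (j - 1 - i - 1) := ih (j - 1)
        _ = Subgroup.upperCentralSeries G (j - (i + 1) - 1) := by
            have h : j - 1 - i - 1 = j - (i + 1) - 1 := by omega
            rw [h]
    · calc ⁅⁅Subgroup.upperCentralSeries G j, Subgroup.lowerCentralSeries (⊤ : Subgroup G) i⁆, (⊤ : Subgroup G)⁆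
          = ⁅⁅Subgroup.lowerCentralSeries (⊤ : Subgroup G) i, Subgroup.upperCentralSeries G j⁆, (⊤ : Subgroup G)⁆ := by
            rw [Subgroup.commutator_comm (Subgroup.upperCentralSeries G j)]
        _ ≤ ⁅Subgroup.upperCentralSeries G (j - i - 1), (⊤ : Subgroup G)⁆ :=
            Subgroup.commutator_mono (ih j) le_rfl
        _ ≤ Subgroup.upperCentralSeries G (j - i - 1 - 1) := ucs_comm_top _
        _ = Subgroup.upperCentralSeries G (j - (i + 1) - 1) := by
            have h : j - i - 1 - 1 = j - (i + 1) - 1 := by omega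
            rw [h]

theorem lcs_comm_ucs_mem {i j : ℕ} {x z : G} (hx : x ∈ Subgroup.lowerCentralSeries (⊤ : Subgroup G) i)
    (hz : z ∈ Subgroup.upperCentralSeries G j) : ⁅x, z⁆ ∈ Subgroup.upperCentralSeries G (j - i - 1) :=
  lcs_comm_ucs i j (Subgroup.commutator_mem_commutator hx hz)

/-- elements of `K` lying in `ζ_i(G)` lie in `ζ_i(K)`. -/
theorem ucs_inf_le (K : Subgroup G) : ∀ (i : ℕ) (x : K),
    (x : G) ∈ Subgroup.upperCentralSeries G i → x ∈ Subgroup.upperCentralSeries K i := by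
  intro i
  induction i with
  | zero =>
    intro x hx
    simp only [Subgroup.upperCentralSeries_zero, Subgroup.mem_bot] at hx ⊢
    exact Subtype.ext hx
  | succ i ih =>
    intro x hx
    rw [Subgroup.mem_upperCentralSeries_succ_iff]
    intro y
    apply ih
    have := (Subgroup.mem_upperCentralSeries_succ_iff.mp hx) (y : G)
    simpa [commutatorElement_def] using this

end Aux

section Main

open Subgroup

variable {G : Type*} [Group G] (K : Subgroup G) (n : ℕ)
variable (hKZ : ∀ g : G, ∃ k ∈ K, ∃ z ∈ Subgroup.upperCentralSeries G n, g = k * z)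

include hKZ

theorem hekster_decomp : ∀ i : ℕ, Subgroup.lowerCentralSeries (⊤ : Subgroup G) i ≤
    Subgroup.map K.subtype (Subgroup.lowerCentralSeries (⊤ : Subgroup K) i) ⊔ Subgroup.upperCentralSeries G (n - i) := by
  intro i
  induction i with
  | zero =>
    intro g _
    obtain ⟨k, hk, z, hz, rfl⟩ := hKZ g
    exact mul_mem (le_sup_left (α := Subgroup G) ⟨⟨k, hk⟩, trivial, rfl⟩)
      (le_sup_right (α := Subgroup G) hz)
  | succ i ih =>
    rw [lcs_succ', Subgroup.commutator_le]
    intro a ha y _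
    have ha' : a ∈ ((Subgroup.map K.subtype (Subgroup.lowerCentralSeries (⊤ : Subgroup K) i) : Set G) *
        (Subgroup.upperCentralSeries G (n - i) : Set G)) := by
      rw [← Subgroup.mul_normal]
      exact ih ha
    obtain ⟨k, hk, z, hz, rfl⟩ := ha'
    obtain ⟨k', hk', z', hz', rfl⟩ := hKZ y
    obtain ⟨k₀, hk₀, rfl⟩ := hk
    set M := Subgroup.map K.subtype (Subgroup.lowerCentralSeries (⊤ : Subgroup K) (i + 1))
    set Z := Subgroup.upperCentralSeries G (n - (i + 1))
    set k : G := K.subtype k₀ with hkdef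
    have e1 : ⁅k * z, k' * z'⁆ =
        (k * ⁅z, k' * z'⁆ * k⁻¹) * (⁅k, k'⁆ * (k' * ⁅k, z'⁆ * k'⁻¹)) := by
      simp only [commutatorElement_def]
      group
    rw [e1]
    have hzmem : k * ⁅z, k' * z'⁆ * k⁻¹ ∈ Z := by
      apply (inferInstance : (Subgroup.upperCentralSeries G (n - (i + 1))).Normal).conj_mem
      have h2 : ⁅z, k' * z'⁆ ∈ Subgroup.upperCentralSeries G (n - i - 1) :=
        ucs_comm_top (G := G) (n - i) (Subgroup.commutator_mem_commutator hz (Subgroup.mem_top _))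
      have heq : n - i - 1 = n - (i + 1) := by omega
      rwa [heq] at h2
    have hkmem : ⁅k, k'⁆ ∈ M := by
      refine ⟨⁅k₀, ⟨k', hk'⟩⁆, ?_, by simp [hkdef, map_commutatorElement]⟩
      rw [lcs_succ']
      exact Subgroup.commutator_mem_commutator hk₀ (Subgroup.mem_top _)
    have hkz' : k' * ⁅k, z'⁆ * k'⁻¹ ∈ Z := by
      apply (inferInstance : (Subgroup.upperCentralSeries G (n - (i + 1))).Normal).conj_mem
      have hkG : k ∈ Subgroup.lowerCentralSeries (⊤ : Subgroup G) i :=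
        Subgroup.lowerCentralSeries_map_subtype_le K i ⟨k₀, hk₀, rfl⟩
      have h2 : ⁅k, z'⁆ ∈ Subgroup.upperCentralSeries G (n - i - 1) :=
        lcs_comm_ucs_mem hkG hz'
      have heq : n - i - 1 = n - (i + 1) := by omega
      rwa [heq] at h2
    exact mul_mem (le_sup_right (α := Subgroup G) hzmem)
      (mul_mem (le_sup_left (α := Subgroup G) hkmem) (le_sup_right (α := Subgroup G) hkz'))

theorem hekster_ucs_K : ∀ (i : ℕ) (x : K), x ∈ Subgroup.lowerCentralSeries (⊤ : Subgroup K) n →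
    x ∈ Subgroup.upperCentralSeries K i → (x : G) ∈ Subgroup.upperCentralSeries G i := by
  intro i
  induction i with
  | zero =>
    intro x _ hx
    simp only [Subgroup.upperCentralSeries_zero, Subgroup.mem_bot] at hx ⊢
    simp [hx]
  | succ i ih =>
    intro x hxl hxu
    rw [Subgroup.mem_upperCentralSeries_succ_iff]
    intro g
    obtain ⟨k, hk, z, hz, rfl⟩ := hKZ g
    have hxG : (x : G) ∈ Subgroup.lowerCentralSeries (⊤ : Subgroup G) n :=
      Subgroup.lowerCentralSeries_map_subtype_le K n ⟨x, hxl, rfl⟩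
    have hxz : ⁅(x : G), z⁆ = 1 := by
      have := lcs_comm_ucs_mem hxG hz
      simp only [Nat.sub_self, Nat.zero_sub, Subgroup.upperCentralSeries_zero, Subgroup.mem_bot] at this
      exact this
    have e : (x : G) * ((k) * z) * (x : G)⁻¹ * ((k) * z)⁻¹ =
        ⁅(x : G), k⁆ * ((k) * ⁅(x : G), z⁆ * (k)⁻¹) := by
      simp only [commutatorElement_def]
      group
    rw [commutatorElement_def, e, hxz]
    simp only [mul_one, mul_inv_cancel_right]
    rw [mul_inv_cancel, mul_one]
    have hcl : ⁅x, (⟨k, hk⟩ : K)⁆ ∈ Subgroup.lowerCentralSeries (⊤ : Subgroup K) n := by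
      apply Subgroup.lowerCentralSeries_antitone ⊤ (Nat.le_succ n)
      rw [lcs_succ']
      exact Subgroup.commutator_mem_commutator hxl (Subgroup.mem_top _)
    have hcu : ⁅x, (⟨k, hk⟩ : K)⁆ ∈ Subgroup.upperCentralSeries K i := by
      have := (Subgroup.mem_upperCentralSeries_succ_iff.mp hxu) ⟨k, hk⟩
      simpa [commutatorElement_def] using this
    have := ih ⁅x, (⟨k, hk⟩ : K)⁆ hcl hcu
    simpa [commutatorElement_def] using this

end Main

/-- **Hekster's lemma, part 3.** If `G = K·ζ_n(G)` then
`γ_{n+1}(G) ∩ ζ_n(G) = γ_{n+1}(K) ∩ ζ_n(K)`.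
In Mathlib's indexing `γ_{n+1}` is `lowerCentralSeries · n`. -/
theorem hekster_inf (G : Type*) [Group G] (K : Subgroup G) (n : ℕ)
    (hn : 0 < n)
    (hKZ : ∀ g : G, ∃ k ∈ K, ∃ z ∈ upperCentralSeries G n, g = k * z) :
    (⊤ : Subgroup G).lowerCentralSeries n ⊓ upperCentralSeries G n =
      Subgroup.map K.subtype ((⊤ : Subgroup K).lowerCentralSeries n ⊓ upperCentralSeries K n) := by
  apply le_antisymm
  · rintro x ⟨hx1, hx2⟩
    have hx1' : x ∈ Subgroup.map K.subtype ((⊤ : Subgroup K).lowerCentralSeries n) := by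
      have h := hekster_decomp K n hKZ n hx1
      simpa [Nat.sub_self] using h
    obtain ⟨x₀, hx₀, rfl⟩ := hx1'
    exact ⟨x₀, ⟨hx₀, ucs_inf_le K n x₀ hx2⟩, rfl⟩
  · rintro x ⟨x₀, ⟨h1, h2⟩, rfl⟩
    exact ⟨lowerCentralSeries_map_subtype_le K n ⟨x₀, h1, rfl⟩,
      hekster_ucs_K K n hKZ n x₀ h1 h2⟩
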